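/- Let π be a policy with occupancy measure q̄ = q^π, and let q̃ : {0,…,H} × S × A → ℝ satisfy q̃_h(s,a) ≥ 0 for all h,s,a, Σ_{b∈A} q̃_h(s,b) > 0 for all h,s, and ‖q̄ − q̃‖₁ ≤ ε_oe. Define the policy π̃ by π̃_h(a|s) = q̃_h(s,a) / Σ_{b∈A} q̃_h(s,b). Then the occupancy measure of π̃ satisfies ‖q^{π̃} − q̄‖₁ ≤ 2(H+1)·ε_oe. -/

import Mathlib

/-- ℓ¹ norm Σ_{h,s,a} |·| on functions {0,…,H} × S × A → ℝ. -/
def l1norm {S A : Type*} [Fintype S] [Fintype A] (H : ℕ) (q : ℕ → S → A → ℝ) : ℝ :=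
  ∑ h ∈ Finset.range (H + 1), ∑ s : S, ∑ a : A, |q h s a|

/-- A policy: `π h s a` is the probability of action `a` at state `s`, step `h`. -/
def IsPolicy {S A : Type*} [Fintype A] (H : ℕ) (π : ℕ → S → A → ℝ) : Prop :=
  ∀ h ≤ H, ∀ s : S, (∀ a : A, 0 ≤ π h s a) ∧ ∑ a : A, π h s a = 1

/-- The occupancy measure q^π of a policy π, defined recursively:
q^π_0(s,a) = π_0(a|s) if s = s0, else 0;
q^π_{h+1}(s,a) = π_{h+1}(a|s) · Σ_{s',a'} p_h(s|s',a') q^π_h(s',a'). -/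
def occMeasure {S A : Type*} [Fintype S] [Fintype A] [DecidableEq S] (s0 : S)
    (p : ℕ → S → A → S → ℝ) (π : ℕ → S → A → ℝ) : ℕ → S → A → ℝ
  | 0 => fun s a => if s = s0 then π 0 s a else 0
  | (h + 1) => fun s a =>
      π (h + 1) s a * ∑ s' : S, ∑ a' : A, p h s' a' s * occMeasure s0 p π h s' a'

/-- Row-sum representation of the occupancy measure. -/
lemma occ_rep {S A : Type*} [Fintype S] [Fintype A] [DecidableEq S] (s0 : S)
    (p : ℕ → S → A → S → ℝ) (π : ℕ → S → A → ℝ) (h : ℕ)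
    (hsum1 : ∀ s : S, ∑ a : A, π h s a = 1) (s : S) (a : A) :
    occMeasure s0 p π h s a = π h s a * ∑ b : A, occMeasure s0 p π h s b := by
  cases h with
  | zero =>
    simp only [occMeasure]
    by_cases hs : s = s0 <;> simp [hs, hsum1 s0]
  | succ n =>
    simp only [occMeasure]
    rw [← Finset.sum_mul, hsum1 s, one_mul]

theorem stmt6 {S A : Type*} [Fintype S] [Fintype A] [DecidableEq S] [Nonempty S] [Nonempty A]
    (H : ℕ) (s0 : S) (p : ℕ → S → A → S → ℝ)
    (hp : ∀ h < H, ∀ (s : S) (a : A), (∀ s' : S, 0 ≤ p h s a s') ∧ ∑ s' : S, p h s a s' = 1)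
    (π : ℕ → S → A → ℝ) (hπ : IsPolicy H π)
    (εoe : ℝ) (hεoe : 0 ≤ εoe)
    (qtil : ℕ → S → A → ℝ)
    (hpos : ∀ h ≤ H, ∀ (s : S) (a : A), 0 ≤ qtil h s a)
    (hsum : ∀ h ≤ H, ∀ s : S, 0 < ∑ b : A, qtil h s b)
    (hclose : l1norm H (fun h s a => occMeasure s0 p π h s a - qtil h s a) ≤ εoe) :
    l1norm H (fun h s a =>
        occMeasure s0 p (fun h s a => qtil h s a / ∑ b : A, qtil h s b) h s a -
          occMeasure s0 p π h s a) ≤ 2 * ((H : ℝ) + 1) * εoe := by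
  set πt : ℕ → S → A → ℝ := fun h s a => qtil h s a / ∑ b : A, qtil h s b with hπt_def
  have hπt1 : ∀ h ≤ H, ∀ s : S, ∑ a : A, πt h s a = 1 := by
    intro h hh s
    simp only [hπt_def]
    rw [← Finset.sum_div, div_self (hsum h hh s).ne']
  have hπtpos : ∀ h ≤ H, ∀ (s : S) (a : A), 0 ≤ πt h s a := by
    intro h hh s a
    exact div_nonneg (hpos h hh s a) (hsum h hh s).le
  set q' : ℕ → S → A → ℝ := occMeasure s0 p πt with hq'
  set qb : ℕ → S → A → ℝ := occMeasure s0 p π with hqb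
  set e : ℕ → ℝ := fun h => ∑ s : S, ∑ a : A, |q' h s a - qb h s a| with he
  set ε : ℕ → ℝ := fun h => ∑ s : S, ∑ a : A, |qb h s a - qtil h s a| with hε
  set D : ℕ → ℝ := fun h => ∑ s : S, |(∑ a : A, q' h s a) - (∑ a : A, qb h s a)| with hD
  have hεnonneg : ∀ h, 0 ≤ ε h := fun h =>
    Finset.sum_nonneg fun s _ => Finset.sum_nonneg fun a _ => abs_nonneg _
  -- Per-step bound: e h ≤ D h + 2 ε h
  have step : ∀ h ≤ H, e h ≤ D h + 2 * ε h := by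
    intro h hh
    have key : ∀ s : S,
        ∑ a : A, |q' h s a - qb h s a|
          ≤ |(∑ a : A, q' h s a) - (∑ a : A, qb h s a)|
            + 2 * ∑ a : A, |qb h s a - qtil h s a| := by
      intro s
      set x : ℝ := ∑ a : A, q' h s a with hx
      set xb : ℝ := ∑ a : A, qb h s a with hxb
      set y : ℝ := ∑ b : A, qtil h s b with hy
      have hy0 : 0 < y := hsum h hh s
      have rep' : ∀ a : A, q' h s a = πt h s a * x :=
        occ_rep s0 p πt h (hπt1 h hh) s
      have repb : ∀ a : A, qb h s a = π h s a * xb :=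
        occ_rep s0 p π h (fun s => (hπ h hh s).2) s
      have t1 : ∀ a : A, |q' h s a - qb h s a|
          ≤ πt h s a * |x - xb| + |πt h s a * xb - qb h s a| := by
        intro a
        have : q' h s a - qb h s a = πt h s a * (x - xb) + (πt h s a * xb - qb h s a) := by
          rw [rep' a]; ring
        rw [this]
        calc |πt h s a * (x - xb) + (πt h s a * xb - qb h s a)|
            ≤ |πt h s a * (x - xb)| + |πt h s a * xb - qb h s a| := abs_add_le _ _
          _ = πt h s a * |x - xb| + |πt h s a * xb - qb h s a| := by
              rw [abs_mul, abs_of_nonneg (hπtpos h hh s a)]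
      have t2 : ∀ a : A, |πt h s a * xb - qb h s a|
          ≤ qtil h s a * |xb - y| / y + |qb h s a - qtil h s a| := by
        intro a
        have hdecomp : πt h s a * xb - qb h s a
            = qtil h s a * (xb - y) / y + (qtil h s a - qb h s a) := by
          simp only [hπt_def]
          rw [← hy]
          field_simp [hy0.ne']
          ring
        rw [hdecomp]
        calc |qtil h s a * (xb - y) / y + (qtil h s a - qb h s a)|
            ≤ |qtil h s a * (xb - y) / y| + |qtil h s a - qb h s a| := abs_add_le _ _
          _ = qtil h s a * |xb - y| / y + |qb h s a - qtil h s a| := by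
              rw [abs_div, abs_mul, abs_of_nonneg (hpos h hh s a), abs_of_pos hy0,
                abs_sub_comm (qtil h s a) (qb h s a)]
      have hxy : |xb - y| ≤ ∑ a : A, |qb h s a - qtil h s a| := by
        rw [hxb, hy, ← Finset.sum_sub_distrib]
        exact Finset.abs_sum_le_sum_abs _ _
      calc ∑ a : A, |q' h s a - qb h s a|
          ≤ ∑ a : A, (πt h s a * |x - xb| + |πt h s a * xb - qb h s a|) :=
            Finset.sum_le_sum fun a _ => t1 a
        _ = |x - xb| + ∑ a : A, |πt h s a * xb - qb h s a| := by
            rw [Finset.sum_add_distrib, ← Finset.sum_mul, hπt1 h hh s, one_mul]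
        _ ≤ |x - xb| + ∑ a : A, (qtil h s a * |xb - y| / y + |qb h s a - qtil h s a|) := by
            gcongr with a
            exact t2 a
        _ = |x - xb| + (|xb - y| + ∑ a : A, |qb h s a - qtil h s a|) := by
            rw [Finset.sum_add_distrib]
            congr 2
            rw [← Finset.sum_div, ← Finset.sum_mul, ← hy, mul_comm,
              mul_div_assoc, div_self hy0.ne', mul_one]
        _ ≤ |x - xb| + 2 * ∑ a : A, |qb h s a - qtil h s a| := by
            have := hxy; nlinarith [hxy]
    calc e h = ∑ s : S, ∑ a : A, |q' h s a - qb h s a| := rfl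
      _ ≤ ∑ s : S, (|(∑ a : A, q' h s a) - (∑ a : A, qb h s a)|
            + 2 * ∑ a : A, |qb h s a - qtil h s a|) :=
          Finset.sum_le_sum fun s _ => key s
      _ = D h + 2 * ε h := by
          rw [Finset.sum_add_distrib, ← Finset.mul_sum]
  -- Transport: D (h+1) ≤ e h for h < H
  have transport : ∀ h < H, D (h + 1) ≤ e h := by
    intro h hh
    have hrow : ∀ (π' : ℕ → S → A → ℝ), (∑ a : A, π' (h+1) s0 a = 0 ∨ True) → True := fun _ _ => trivial
    have rowsum : ∀ (π' : ℕ → S → A → ℝ), (∀ s : S, ∑ a : A, π' (h+1) s a = 1) →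
        ∀ s : S, ∑ a : A, occMeasure s0 p π' (h+1) s a
          = ∑ s' : S, ∑ a' : A, p h s' a' s * occMeasure s0 p π' h s' a' := by
      intro π' h1 s
      simp only [occMeasure]
      rw [← Finset.sum_mul, h1 s, one_mul]
    have h1H : h + 1 ≤ H := hh
    rw [hD]
    simp only
    calc ∑ s : S, |(∑ a : A, q' (h+1) s a) - (∑ a : A, qb (h+1) s a)|
        = ∑ s : S, |∑ s' : S, ∑ a' : A, p h s' a' s * (q' h s' a' - qb h s' a')| := by
          refine Finset.sum_congr rfl fun s _ => ?_
          rw [rowsum πt (hπt1 (h+1) h1H) s, rowsum π (fun s => (hπ (h+1) h1H s).2) s]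
          congr 1
          rw [← Finset.sum_sub_distrib]
          refine Finset.sum_congr rfl fun s' _ => ?_
          rw [← Finset.sum_sub_distrib]
          refine Finset.sum_congr rfl fun a' _ => ?_
          ring
      _ ≤ ∑ s : S, ∑ s' : S, ∑ a' : A, p h s' a' s * |q' h s' a' - qb h s' a'| := by
          refine Finset.sum_le_sum fun s _ => ?_
          calc |∑ s' : S, ∑ a' : A, p h s' a' s * (q' h s' a' - qb h s' a')|
              ≤ ∑ s' : S, |∑ a' : A, p h s' a' s * (q' h s' a' - qb h s' a')| :=
                Finset.abs_sum_le_sum_abs _ _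
            _ ≤ ∑ s' : S, ∑ a' : A, |p h s' a' s * (q' h s' a' - qb h s' a')| :=
                Finset.sum_le_sum fun s' _ => Finset.abs_sum_le_sum_abs _ _
            _ = ∑ s' : S, ∑ a' : A, p h s' a' s * |q' h s' a' - qb h s' a'| := by
                refine Finset.sum_congr rfl fun s' _ => Finset.sum_congr rfl fun a' _ => ?_
                rw [abs_mul, abs_of_nonneg ((hp h hh s' a').1 s)]
      _ = ∑ s' : S, ∑ a' : A, (∑ s : S, p h s' a' s) * |q' h s' a' - qb h s' a'| := by
          rw [Finset.sum_comm]
          refine Finset.sum_congr rfl fun s' _ => ?_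
          rw [Finset.sum_comm]
          refine Finset.sum_congr rfl fun a' _ => ?_
          rw [Finset.sum_mul]
      _ = e h := by
          refine Finset.sum_congr rfl fun s' _ => Finset.sum_congr rfl fun a' _ => ?_
          rw [(hp h hh s' a').2, one_mul]
  -- D 0 = 0
  have D0 : D 0 = 0 := by
    have row0 : ∀ (π' : ℕ → S → A → ℝ), (∑ a : A, π' 0 s0 a = 1) →
        ∀ s : S, ∑ a : A, occMeasure s0 p π' 0 s a = if s = s0 then 1 else 0 := by
      intro π' h1 s
      simp only [occMeasure]
      by_cases hs : s = s0 <;> simp [hs, h1]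
    rw [hD]
    simp only
    refine Finset.sum_eq_zero fun s _ => ?_
    rw [row0 πt (hπt1 0 (Nat.zero_le H) s0) s, row0 π ((hπ 0 (Nat.zero_le H) s0).2) s,
      sub_self, abs_zero]
  -- Induction: e h ≤ 2 * ∑_{h'≤h} ε h'
  have ind : ∀ h ≤ H, e h ≤ 2 * ∑ h' ∈ Finset.range (h + 1), ε h' := by
    intro h
    induction h with
    | zero =>
      intro _
      have := step 0 (Nat.zero_le H)
      rw [D0] at this
      simpa using this
    | succ n ih =>
      intro hnH
      have hnH' : n ≤ H := Nat.le_of_succ_le hnH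
      have h1 := step (n + 1) hnH
      have h2 := transport n (Nat.lt_of_succ_le hnH)
      have h3 := ih hnH'
      rw [Finset.sum_range_succ]
      linarith
  -- Tail bound: partial sums of ε are ≤ εoe
  have partialSum : ∀ h ≤ H, ∑ h' ∈ Finset.range (h + 1), ε h' ≤ εoe := by
    intro h hh
    have hsub : Finset.range (h + 1) ⊆ Finset.range (H + 1) := by
      intro x hx
      simp only [Finset.mem_range] at *
      omega
    calc ∑ h' ∈ Finset.range (h + 1), ε h'
        ≤ ∑ h' ∈ Finset.range (H + 1), ε h' :=
          Finset.sum_le_sum_of_subset_of_nonneg hsub fun i _ _ => hεnonneg i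
      _ ≤ εoe := hclose
  -- Conclude
  have final : l1norm H (fun h s a => q' h s a - qb h s a)
      ≤ 2 * ((H : ℝ) + 1) * εoe := by
    unfold l1norm
    calc ∑ h ∈ Finset.range (H + 1), ∑ s : S, ∑ a : A, |q' h s a - qb h s a|
        = ∑ h ∈ Finset.range (H + 1), e h := rfl
      _ ≤ ∑ h ∈ Finset.range (H + 1), 2 * εoe := by
          refine Finset.sum_le_sum fun h hh => ?_
          have hhH : h ≤ H := by simpa [Nat.lt_succ_iff] using Finset.mem_range.mp hh
          calc e h ≤ 2 * ∑ h' ∈ Finset.range (h + 1), ε h' := ind h hhH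
            _ ≤ 2 * εoe := by linarith [partialSum h hhH]
      _ = 2 * ((H : ℝ) + 1) * εoe := by
          rw [Finset.sum_const, Finset.card_range]
          push_cast
          ring
  exact final
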